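/- Suppose d > 0, X is ω^{2d+1}-large, and min X > max{k, i, 2}. Then X is (ω^d, k, i)-persistent. -/

import Mathlib

open Finset

/-- Minimum of a finite set of naturals (0 for the empty set). -/
def fmin (X : Finset ℕ) : ℕ := WithTop.untopD 0 X.min

/-- Maximum of a finite set of naturals (0 for the empty set). -/
def fmax (X : Finset ℕ) : ℕ := WithBot.unbotD 0 X.max

/-- `OmegaLarge d X` : `X` is ω^d-large (for `d ≥ 1`; `OmegaLarge 0` means nonempty).
`X` is ω^{d+1}-large iff `X = {min X} ∪ ⋃_{m < min X} X_m` where the `X_m` form a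
stack (each max below the next min) of ω^d-large sets all above `min X`. -/
def OmegaLarge : ℕ → Finset ℕ → Prop
  | 0, X => X.Nonempty
  | d+1, X => X.Nonempty ∧ ∃ f : ℕ → Finset ℕ,
      (∀ m < fmin X, OmegaLarge d (f m)) ∧
      (∀ m, m + 1 < fmin X → fmax (f m) < fmin (f (m+1))) ∧
      (∀ m < fmin X, fmin X < fmin (f m)) ∧
      X = insert (fmin X) ((Finset.range (fmin X)).biUnion f)

/-- `OmegaMulLarge d n X` : `X` is ω^d·n-large, i.e. a union of a stack of `n`
ω^d-large sets. -/
def OmegaMulLarge (d n : ℕ) (X : Finset ℕ) : Prop :=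
  ∃ f : ℕ → Finset ℕ,
    (∀ m < n, OmegaLarge d (f m)) ∧
    (∀ m, m + 1 < n → fmax (f m) < fmin (f (m+1))) ∧
    X = (Finset.range n).biUnion f

/-- A (finite) binary tree: a set of binary strings closed under initial segments. -/
def IsTree (T : Finset (List Bool)) : Prop :=
  ∀ σ ∈ T, ∀ τ : List Bool, τ <+: σ → τ ∈ T

/-- `level T x` is `T ∩ 2^x`, the set of strings in `T` of length `x`. -/
def level (T : Finset (List Bool)) (x : ℕ) : Finset (List Bool) :=
  T.filter (fun σ => σ.length = x)

/-- Two strings are compatible if one is an initial segment of the other. -/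
def Compat (σ τ : List Bool) : Prop := σ <+: τ ∨ τ <+: σ

instance (σ τ : List Bool) : Decidable (Compat σ τ) := by
  unfold Compat; infer_instance

/-- `T_ρ` : the elements of `T` compatible with `ρ`. -/
def Tsub (T : Finset (List Bool)) (ρ : List Bool) : Finset (List Bool) :=
  T.filter (fun σ => Compat σ ρ)

/-- `x` and `z` are consecutive elements of `X`. -/
def Consec (X : Finset ℕ) (x z : ℕ) : Prop :=
  x ∈ X ∧ z ∈ X ∧ x < z ∧ ∀ y ∈ X, y ≤ x ∨ z ≤ y

/-- `T` is `X`-quasistrong: `T` is a tree meeting every level in `X`, and every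
node at a level of `X` has exactly two (necessarily incompatible) extensions at
the next level of `X`. -/
def QuasiStrong (X : Finset ℕ) (T : Finset (List Bool)) : Prop :=
  IsTree T ∧ (∀ x ∈ X, (level T x).Nonempty) ∧
  ∀ x z, Consec X x z → ∀ σ ∈ level T x,
    ((level T z).filter (fun τ => σ <+: τ)).card = 2

/-- `σ` is a leaf (maximal element) of `S`. -/
def IsLeaf (S : Finset (List Bool)) (σ : List Bool) : Prop :=
  σ ∈ S ∧ ∀ τ ∈ S, σ <+: τ → τ = σ

/-- `S` is `(C,Y)`-prehomogeneous for color `c`. -/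
def PrehomFor (C : List Bool → ℕ) (Y : Finset ℕ) (S : Finset (List Bool)) (c : ℕ) : Prop :=
  ∀ x z, Consec Y x z → ∀ σ ∈ level S x, ∀ τ ∈ level S z, σ <+: τ →
    ∃ ζ ∈ S, σ <+: ζ ∧ ζ <+: τ ∧ C ζ = c

/-- `S` is `(C,Y)`-prehomogeneous (for some color). -/
def Prehom (C : List Bool → ℕ) (Y : Finset ℕ) (S : Finset (List Bool)) : Prop :=
  ∃ c, PrehomFor C Y S c

/-- The main clause of persistence: for every `X`-quasistrong tree `T` and every
`k`-coloring `C` of the leaves `T ∩ 2^{max X}`, there are a color `c < k` and a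
`Y`-quasistrong subtree `S ⊆ T` each of whose leaves has an extension in `C⁻¹(c)`. -/
def PersClause (k : ℕ) (X Y : Finset ℕ) : Prop :=
  ∀ T : Finset (List Bool), QuasiStrong X T →
    ∀ C : List Bool → ℕ, (∀ σ ∈ level T (fmax X), C σ < k) →
      ∃ c < k, ∃ S ⊆ T, QuasiStrong Y S ∧
        ∀ σ, IsLeaf S σ → ∃ τ ∈ level T (fmax X), σ <+: τ ∧ C τ = c

/-- `Persistent d n k i X` : `X` is `(ω^d·n, k, i)`-persistent. -/
def Persistent (d n k : ℕ) : ℕ → Finset ℕ → Prop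
  | 0, X => OmegaMulLarge d n X
  | i+1, X => ∃ Y, Y ⊆ X ∧ Persistent d n k i Y ∧ PersClause k X Y

/-- `SuperPersistent d n k i X` : `X` is `(ω^d·n, k, i)`-superpersistent. -/
def SuperPersistent (d n k i : ℕ) (X : Finset ℕ) : Prop :=
  ∀ T : List Bool → Finset (List Bool),
    (∀ ρ : List Bool, ρ.length = fmin X →
      QuasiStrong X (T ρ) ∧ ∀ σ ∈ T ρ, Compat σ ρ) →
    ∀ C : List Bool → ℕ, (∀ σ, C σ < k) →
      ∃ Y ⊆ X, Persistent d n k i Y ∧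
        ∀ ρ : List Bool, ρ.length = fmin X →
          ∃ S ⊆ T ρ, QuasiStrong Y S ∧ Prehom C Y S

/-- `eOf δ` : the least integer `e` with `2^{-e} < δ`. -/
noncomputable def eOf (δ : ℚ) : ℕ := sInf {e : ℕ | (2:ℚ) ^ (-(e:ℤ)) < δ}

/-- The Kučera–Gács coding bound `g(m,δ) = (m-1)e + m(m-1)/2`. -/
noncomputable def gKG (m : ℕ) (δ : ℚ) : ℕ := (m-1) * eOf δ + m*(m-1)/2

/-- `ḡ(x,k,i)`: iterated Kučera–Gács bound. -/
noncomputable def gbar (x k : ℕ) : ℕ → ℕ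
  | 0 => x + k + 1
  | i+1 => gKG (gbar x k i) (1/(k:ℚ))

/-- `h(ℓ,m,δ) = 2^{eℓ·2^{5m}}` where `e` is least with `2^{-e} < δ`. -/
noncomputable def hFun (l m : ℕ) (δ : ℚ) : ℕ := 2 ^ (eOf δ * l * 2 ^ (5*m))

/-- `h̄(x,n,k) = h(2^x, n, 1/k)·k^{2^x}`. -/
noncomputable def hbar (x n k : ℕ) : ℕ := hFun (2^x) n (1/(k:ℚ)) * k^(2^x)

/-- `expIter n x = exp^n(x)` where `exp(x) = 2^x`. -/
def expIter : ℕ → ℕ → ℕ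
  | 0, x => x
  | n+1, x => 2 ^ (expIter n x)

set_option maxHeartbeats 1000000



lemma fmin_eq {X : Finset ℕ} (h : X.Nonempty) : fmin X = X.min' h := by
  rw [fmin, ← Finset.coe_min' h, WithTop.untopD_coe]

lemma fmax_eq {X : Finset ℕ} (h : X.Nonempty) : fmax X = X.max' h := by
  rw [fmax, ← Finset.coe_max' h, WithBot.unbotD_coe]

lemma fmin_mem {X : Finset ℕ} (h : X.Nonempty) : fmin X ∈ X := by
  rw [fmin_eq h]; exact X.min'_mem h

lemma fmax_mem {X : Finset ℕ} (h : X.Nonempty) : fmax X ∈ X := by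
  rw [fmax_eq h]; exact X.max'_mem h

lemma fmin_le {X : Finset ℕ} {x : ℕ} (hx : x ∈ X) : fmin X ≤ x := by
  rw [fmin_eq ⟨x, hx⟩]; exact X.min'_le x hx

lemma le_fmax {X : Finset ℕ} {x : ℕ} (hx : x ∈ X) : x ≤ fmax X := by
  rw [fmax_eq ⟨x, hx⟩]; exact X.le_max' x hx

lemma fmin_le_fmax {X : Finset ℕ} (h : X.Nonempty) : fmin X ≤ fmax X :=
  le_fmax (fmin_mem h)

lemma fmin_subset {Y X : Finset ℕ} (h : Y ⊆ X) (hY : Y.Nonempty) : fmin X ≤ fmin Y :=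
  fmin_le (h (fmin_mem hY))

lemma fmax_subset {Y X : Finset ℕ} (h : Y ⊆ X) (hY : Y.Nonempty) : fmax Y ≤ fmax X :=
  le_fmax (h (fmax_mem hY))

lemma fmin_insert_of_le {s : Finset ℕ} {b : ℕ} (h : ∀ a ∈ s, b ≤ a) :
    fmin (insert b s) = b := by
  have hne : (insert b s).Nonempty := ⟨b, mem_insert_self b s⟩
  have h1 : fmin (insert b s) ≤ b := fmin_le (mem_insert_self b s)
  have h2 : b ≤ fmin (insert b s) := by
    rcases mem_insert.1 (fmin_mem hne) with h' | h'
    · omega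
    · exact h _ h'
  omega

lemma fmin_card_le_fmax {X : Finset ℕ} (h : X.Nonempty) : fmin X + X.card ≤ fmax X + 1 := by
  have hsub : X ⊆ Finset.Icc (fmin X) (fmax X) := fun x hx =>
    Finset.mem_Icc.2 ⟨fmin_le hx, le_fmax hx⟩
  have := Finset.card_le_card hsub
  rw [Nat.card_Icc] at this
  have := fmin_le_fmax h
  omega

-- Consec lemmas
lemma consec_subset {E Y : Finset ℕ} {x z : ℕ} (hE : E ⊆ Y) (hc : Consec Y x z)
    (hx : x ∈ E) (hz : z ∈ E) : Consec E x z :=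
  ⟨hx, hz, hc.2.2.1, fun y hy => hc.2.2.2 y (hE hy)⟩

lemma consec_not_singleton {a x z : ℕ} (h : Consec {a} x z) : False := by
  obtain ⟨hx, hz, hlt, -⟩ := h
  rw [Finset.mem_singleton] at hx hz; omega

lemma consec_min {Y : Finset ℕ} (hne : (Y.erase (fmin Y)).Nonempty) :
    Consec Y (fmin Y) (fmin (Y.erase (fmin Y))) := by
  have hYne : Y.Nonempty := by
    obtain ⟨a, ha⟩ := hne; exact ⟨a, Finset.mem_of_mem_erase ha⟩
  have hmem1 : fmin (Y.erase (fmin Y)) ∈ Y.erase (fmin Y) := fmin_mem hne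
  have hmemY : fmin (Y.erase (fmin Y)) ∈ Y := Finset.mem_of_mem_erase hmem1
  have hne1 : fmin (Y.erase (fmin Y)) ≠ fmin Y := Finset.ne_of_mem_erase hmem1
  have hlt : fmin Y < fmin (Y.erase (fmin Y)) :=
    lt_of_le_of_ne (fmin_le hmemY) (Ne.symm hne1)
  refine ⟨fmin_mem hYne, hmemY, hlt, fun y hy => ?_⟩
  by_cases hy' : y = fmin Y
  · left; omega
  · right; exact fmin_le (Finset.mem_erase.2 ⟨hy', hy⟩)

lemma consec_min_eq {Y : Finset ℕ} {z : ℕ} (h : Consec Y (fmin Y) z) :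
    (Y.erase (fmin Y)).Nonempty ∧ z = fmin (Y.erase (fmin Y)) := by
  obtain ⟨hx, hz, hlt, hbet⟩ := h
  have hzE : z ∈ Y.erase (fmin Y) := Finset.mem_erase.2 ⟨by omega, hz⟩
  have hne : (Y.erase (fmin Y)).Nonempty := ⟨z, hzE⟩
  have h1 : fmin (Y.erase (fmin Y)) ≤ z := fmin_le hzE
  have hmemY : fmin (Y.erase (fmin Y)) ∈ Y := Finset.mem_of_mem_erase (fmin_mem hne)
  have hne1 : fmin (Y.erase (fmin Y)) ≠ fmin Y := Finset.ne_of_mem_erase (fmin_mem hne)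
  rcases hbet _ hmemY with h2 | h2
  · have := fmin_le hmemY; omega
  · exact ⟨hne, by omega⟩

lemma consec_erase {Y : Finset ℕ} {x z : ℕ} (h : Consec Y x z) (hx : x ≠ fmin Y) :
    Consec (Y.erase (fmin Y)) x z := by
  obtain ⟨hxY, hzY, hlt, hbet⟩ := h
  have hxm : fmin Y ≤ x := fmin_le hxY
  refine ⟨Finset.mem_erase.2 ⟨hx, hxY⟩, Finset.mem_erase.2 ⟨by omega, hzY⟩, hlt,
    fun y hy => hbet y (Finset.mem_of_mem_erase hy)⟩

lemma consec_pred {Y : Finset ℕ} {z : ℕ} (hz : z ∈ Y) (h : fmin Y < z) :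
    ∃ x, Consec Y x z := by
  classical
  have hne : (Y.filter (· < z)).Nonempty := ⟨fmin Y, Finset.mem_filter.2 ⟨fmin_mem ⟨z, hz⟩, h⟩⟩
  refine ⟨fmax (Y.filter (· < z)), ?_, hz, ?_, ?_⟩
  · exact (Finset.mem_filter.1 (fmax_mem hne)).1
  · exact (Finset.mem_filter.1 (fmax_mem hne)).2
  · intro y hy
    by_cases hy' : y < z
    · left; exact le_fmax (Finset.mem_filter.2 ⟨hy, hy'⟩)
    · right; omega


lemma OmegaLarge.nonempty {d : ℕ} {X : Finset ℕ} (h : OmegaLarge d X) : X.Nonempty := by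
  cases d with
  | zero => exact h
  | succ d => exact h.1

lemma omegaLarge_succ_mono {d : ℕ} : ∀ {X : Finset ℕ}, OmegaLarge (d+1) X → OmegaLarge d X := by
  induction d with
  | zero => exact fun h => h.1
  | succ d ih =>
    rintro X ⟨hne, f, h1, h2, h3, h4⟩
    exact ⟨hne, f, fun m hm => ih (h1 m hm), h2, h3, h4⟩

lemma omegaLarge_mono {a b : ℕ} (hab : a ≤ b) {X : Finset ℕ} (h : OmegaLarge b X) :
    OmegaLarge a X := by
  induction b with
  | zero => have : a = 0 := by omega
            subst this; exact h
  | succ b ih =>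
    rcases Nat.eq_or_lt_of_le hab with h' | h'
    · subst h'; exact h
    · exact ih (by omega) (omegaLarge_succ_mono h)

-- stacked blocks chain
lemma stack_chain {g : ℕ → Finset ℕ} {n : ℕ}
    (hst : ∀ m, m + 1 < n → fmax (g m) < fmin (g (m+1)))
    (hne : ∀ m < n, (g m).Nonempty) :
    ∀ s t, s < t → t < n → fmax (g s) < fmin (g t) := by
  intro s t hst' htn
  induction t with
  | zero => omega
  | succ t ih =>
    rcases Nat.eq_or_lt_of_le (Nat.lt_succ_iff.1 hst') with h' | h'
    · subst h'; exact hst s htn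
    · have h1 : fmax (g s) < fmin (g t) := ih (by omega) (by omega)
      have h2 : fmin (g t) ≤ fmax (g t) := fmin_le_fmax (hne t (by omega))
      have h3 : fmax (g t) < fmin (g (t+1)) := hst t htn
      omega

lemma stack_disjoint {g : ℕ → Finset ℕ} {n : ℕ}
    (hst : ∀ m, m + 1 < n → fmax (g m) < fmin (g (m+1)))
    (hne : ∀ m < n, (g m).Nonempty) :
    ∀ s ∈ Finset.range n, ∀ t ∈ Finset.range n, s ≠ t → Disjoint (g s) (g t) := by
  have key : ∀ s t, s < t → t < n → Disjoint (g s) (g t) := by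
    intro s t h1 h2
    have := stack_chain hst hne s t h1 h2
    rw [Finset.disjoint_left]
    intro a has hat
    have := le_fmax has; have := fmin_le hat; omega
  intro s hs t ht hne'
  rw [Finset.mem_range] at hs ht
  rcases Nat.lt_or_ge s t with h | h
  · exact key s t h ht
  · exact (key t s (by omega) hs).symm

-- ω-large: card ≥ min + 1
lemma card_of_omegaLarge_one {B : Finset ℕ} (h : OmegaLarge 1 B) :
    fmin B + 1 ≤ B.card := by
  obtain ⟨hne, g, h1, h2, h3, h4⟩ := h
  have hdisj := stack_disjoint (n := fmin B) h2 (fun m hm => (h1 m hm))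
  have hcard : ((Finset.range (fmin B)).biUnion g).card = ∑ m ∈ Finset.range (fmin B), (g m).card :=
    Finset.card_biUnion hdisj
  have hsum : fmin B ≤ ∑ m ∈ Finset.range (fmin B), (g m).card := by
    calc fmin B = ∑ _m ∈ Finset.range (fmin B), 1 := by simp
    _ ≤ _ := Finset.sum_le_sum (fun m hm => Finset.card_pos.2 (h1 m (Finset.mem_range.1 hm)))
  have hnotmem : fmin B ∉ (Finset.range (fmin B)).biUnion g := by
    intro hmem
    rw [Finset.mem_biUnion] at hmem
    obtain ⟨m, hm, hmem⟩ := hmem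
    rw [Finset.mem_range] at hm
    have := h3 m hm
    have := fmin_le hmem
    omega
  have hBcard : B.card = ((Finset.range (fmin B)).biUnion g).card + 1 := by
    conv_lhs => rw [h4]
    rw [Finset.card_insert_of_notMem hnotmem]
  rw [hBcard, hcard]
  omega

lemma fmax_ge_two_fmin {B : Finset ℕ} (h : OmegaLarge 1 B) : 2 * fmin B ≤ fmax B := by
  have h1 := card_of_omegaLarge_one h
  have h2 := fmin_card_le_fmax h.nonempty
  omega

-- ω²-large: fmax ≥ 2^fmin
lemma fmax_of_omegaLarge_two {V : Finset ℕ} (h : OmegaLarge 2 V) (hv : 1 ≤ fmin V) :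
    2 ^ (fmin V) ≤ fmax V := by
  obtain ⟨hne, g, h1, h2, h3, h4⟩ := h
  set v := fmin V with hv'
  have hblock : ∀ t < v, 2 ^ t * (v + 1) ≤ fmin (g t) := by
    intro t
    induction t with
    | zero => intro h0; have := h3 0 h0; omega
    | succ t ih =>
      intro ht
      have hih := ih (by omega)
      have hmax : 2 * fmin (g t) ≤ fmax (g t) := fmax_ge_two_fmin (h1 t (by omega))
      have hstep : fmax (g t) < fmin (g (t+1)) := h2 t ht
      have : 2 ^ (t+1) * (v+1) = 2 * (2 ^ t * (v+1)) := by ring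
      omega
  have hlast := hblock (v - 1) (by omega)
  have hmaxlast : 2 * fmin (g (v-1)) ≤ fmax (g (v-1)) := fmax_ge_two_fmin (h1 (v-1) (by omega))
  have hsub : g (v-1) ⊆ V := by
    rw [h4]; intro a ha
    exact Finset.mem_insert_of_mem (Finset.mem_biUnion.2 ⟨v-1, Finset.mem_range.2 (by omega), ha⟩)
  have hfmax : fmax (g (v-1)) ≤ fmax V := fmax_subset hsub (h1 (v-1) (by omega)).nonempty
  have hpow : 2 ^ v = 2 * 2 ^ (v-1) := by
    rw [← pow_succ']
    congr 1; omega
  have h2t : 1 ≤ 2 ^ (v-1) := Nat.one_le_two_pow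
  calc 2 ^ v = 2 * 2^(v-1) := hpow
  _ ≤ 2 * (2^(v-1) * (v+1)) := by nlinarith
  _ ≤ 2 * fmin (g (v-1)) := by omega
  _ ≤ fmax (g (v-1)) := hmaxlast
  _ ≤ fmax V := hfmax


-- superset monotonicity
lemma omegaLarge_superset : ∀ d {Y X : Finset ℕ}, OmegaLarge d Y → Y ⊆ X → 1 ≤ fmin X →
    OmegaLarge d X := by
  intro d
  induction d with
  | zero =>
    intro Y X hY hYX _
    exact hY.mono hYX
  | succ d ih =>
    intro Y X hY hYX hx1
    classical
    obtain ⟨hYne, g, hg1, hg2, hg3, hg4⟩ := hY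
    have hXne : X.Nonempty := hYne.mono hYX
    set y0 := fmin Y with hy0
    set x0 := fmin X with hx0
    have hx0y0 : x0 ≤ y0 := fmin_subset hYX hYne
    have hx0X : x0 ∈ X := fmin_mem hXne
    have hy0Y : y0 ∈ Y := fmin_mem hYne
    -- blocks of Y are subsets of Y
    have hgsubY : ∀ m < y0, g m ⊆ Y := by
      intro m hm a ha
      rw [hg4]
      exact Finset.mem_insert_of_mem (Finset.mem_biUnion.2 ⟨m, Finset.mem_range.2 hm, ha⟩)
    set U : ℕ → ℕ := fun m => if m = x0 - 1 then fmax X else fmax (g m) with hU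
    set L : ℕ → ℕ := fun m => match m with | 0 => x0 | (m+1) => U m with hL
    set fX : ℕ → Finset ℕ := fun m => X.filter (fun a => L m < a ∧ a ≤ U m) with hfX
    have hgne : ∀ m < x0, (g m).Nonempty := fun m hm => (hg1 m (by omega)).nonempty
    have hgsub : ∀ m < x0, g m ⊆ fX m := by
      intro m hm a ha
      have haX : a ∈ X := hYX (hgsubY m (by omega) ha)
      have hfa : fmin (g m) ≤ a := fmin_le ha
      have hfa' : a ≤ fmax (g m) := le_fmax ha
      refine Finset.mem_filter.2 ⟨haX, ?_, ?_⟩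
      · -- L m < a
        match m with
        | 0 =>
          have := hg3 0 (by omega)
          show x0 < a; omega
        | (m+1) =>
          show U m < a
          have hm1 : m + 1 < y0 := by omega
          have hstep : fmax (g m) < fmin (g (m+1)) := hg2 m hm1
          have hmx : m ≠ x0 - 1 := by omega
          rw [hU]; simp only [if_neg hmx]
          omega
      · -- a ≤ U m
        rw [hU]
        by_cases hmx : m = x0 - 1
        · simp only [if_pos hmx]; exact le_fmax haX
        · simp only [if_neg hmx]; omega
    have hLge : ∀ m < x0, x0 ≤ L m := by
      intro m hm
      match m with
      | 0 => exact le_refl _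
      | (m+1) =>
        show x0 ≤ U m
        rw [hU]
        by_cases hmx : m = x0 - 1
        · simp only [if_pos hmx]; exact le_fmax hx0X
        · simp only [if_neg hmx]
          have h1 : fmin (g m) ≤ fmax (g m) := fmin_le_fmax (hgne m (by omega))
          have h2 : y0 < fmin (g m) := hg3 m (by omega)
          omega
    have hfXne : ∀ m < x0, (fX m).Nonempty := fun m hm => (hgne m hm).mono (hgsub m hm)
    have hfXmin : ∀ m < x0, L m < fmin (fX m) := by
      intro m hm
      have := fmin_mem (hfXne m hm)
      exact (Finset.mem_filter.1 this).2.1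
    have hfXmax : ∀ m < x0, fmax (fX m) ≤ U m := by
      intro m hm
      have := fmax_mem (hfXne m hm)
      exact (Finset.mem_filter.1 this).2.2
    refine ⟨hXne, fX, ?_, ?_, ?_, ?_⟩
    · intro m hm
      refine ih (hg1 m (by omega)) (hgsub m hm) ?_
      have := hfXmin m hm
      have := hLge m hm
      omega
    · intro m hm
      have h1 := hfXmax m (by omega)
      have h2 := hfXmin (m+1) hm
      have : L (m+1) = U m := rfl
      omega
    · intro m hm
      have := hfXmin m hm
      have := hLge m hm
      omega
    · ext a
      simp only [Finset.mem_insert, Finset.mem_biUnion, Finset.mem_range]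
      constructor
      · intro ha
        by_cases hax : a = x0
        · exact Or.inl hax
        right
        have hax' : x0 < a := lt_of_le_of_ne (fmin_le ha) (Ne.symm hax)
        set P := (Finset.range x0).filter (fun m => a ≤ U m) with hP
        have hPne : P.Nonempty := by
          refine ⟨x0 - 1, Finset.mem_filter.2 ⟨Finset.mem_range.2 (by omega), ?_⟩⟩
          rw [hU]; simp only [if_pos rfl]
          exact le_fmax ha
        set m := fmin P with hm
        have hmP : m ∈ P := fmin_mem hPne
        have hmx0 : m < x0 := Finset.mem_range.1 (Finset.mem_filter.1 hmP).1
        have hmU : a ≤ U m := (Finset.mem_filter.1 hmP).2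
        refine ⟨m, hmx0, Finset.mem_filter.2 ⟨ha, ?_, hmU⟩⟩
        match hmm : m with
        | 0 => show x0 < a; omega
        | (m'+1) =>
          show U m' < a
          by_contra hcon
          push_neg at hcon
          have hm'P : m' ∈ P := Finset.mem_filter.2 ⟨Finset.mem_range.2 (by omega), hcon⟩
          have := fmin_le hm'P
          omega
      · rintro (rfl | ⟨m, hm, hmem⟩)
        · exact hx0X
        · exact Finset.mem_filter.1 hmem |>.1


lemma supplyLemma : ∀ (c : ℕ) (Z : Finset ℕ), OmegaLarge (2*c+1) Z → 3 ≤ fmin Z →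
    ∀ N : ℕ, N ≤ 2 ^ (2 ^ (fmin Z)) →
    ∃ Y, Y ⊆ Z ∧ OmegaLarge c Y ∧
      ∀ x z, Consec Y x z → N ≤ (Z ∩ Finset.Ioc x z).card := by
  intro c
  induction c with
  | zero =>
    intro Z hZ hz3 N hN
    refine ⟨{fmin Z}, ?_, ⟨fmin Z, Finset.mem_singleton_self _⟩, ?_⟩
    · intro a ha; rw [Finset.mem_singleton] at ha; subst ha; exact fmin_mem hZ.nonempty
    · intro x z hc
      obtain ⟨hx, hz, hlt, -⟩ := hc
      rw [Finset.mem_singleton] at hx hz; omega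
  | succ c ih =>
    intro Z hZ hz3 N hN
    have hZ' : OmegaLarge (2*c+3) Z := by
      have : 2*(c+1)+1 = 2*c+3 := by ring
      rwa [this] at hZ
    obtain ⟨hZne, f, hf1, hf2, hf3, hf4⟩ := hZ'
    set z := fmin Z with hzdef
    have hfsubZ : ∀ m < z, f m ⊆ Z := by
      intro m hm a ha
      rw [hf4]
      exact Finset.mem_insert_of_mem (Finset.mem_biUnion.2 ⟨m, Finset.mem_range.2 hm, ha⟩)
    have hf0ne : (f 0).Nonempty := (hf1 0 (by omega)).nonempty
    have hf1ne : (f 1).Nonempty := (hf1 1 (by omega)).nonempty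
    -- bound on fmin (f 2)
    have hmax0 : 2 ^ (fmin (f 0)) ≤ fmax (f 0) := by
      refine fmax_of_omegaLarge_two (omegaLarge_mono (by omega) (hf1 0 (by omega))) ?_
      have := hf3 0 (by omega); omega
    have hmax1 : 2 ^ (fmin (f 1)) ≤ fmax (f 1) := by
      refine fmax_of_omegaLarge_two (omegaLarge_mono (by omega) (hf1 1 (by omega))) ?_
      have := hf3 1 (by omega); omega
    have hstep0 : fmax (f 0) < fmin (f 1) := hf2 0 (by omega)
    have hstep1 : fmax (f 1) < fmin (f 2) := hf2 1 (by omega)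
    have hmin0 : z < fmin (f 0) := hf3 0 (by omega)
    set f₂ := fmin (f 2) with hf₂def
    have hchain1 : 2 ^ (z+1) < fmin (f 1) := by
      calc 2 ^ (z+1) ≤ 2 ^ (fmin (f 0)) := Nat.pow_le_pow_right (by omega) (by omega)
      _ ≤ fmax (f 0) := hmax0
      _ < fmin (f 1) := hstep0
    have hbig : 2 ^ (2 ^ (z+1)) < f₂ := by
      calc 2 ^ (2^(z+1)) ≤ 2 ^ (fmin (f 1)) := Nat.pow_le_pow_right (by omega) (by omega)
      _ ≤ fmax (f 1) := hmax1
      _ < f₂ := hstep1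
    have hzlt : z < 2 ^ z := (Nat.lt_two_pow_self (n := z))
    have hBND : z * (N + 1) + 1 < f₂ := by
      have h1 : z * (N+1) + 1 ≤ 2^z * (2^(2^z) + 1) + 1 := by
        have : N + 1 ≤ 2^(2^z) + 1 := by omega
        nlinarith [Nat.one_le_two_pow (n := 2^z)]
      have h2 : (2:ℕ)^z * (2^(2^z) + 1) + 1 ≤ 2 ^ (2^(z+1)) := by
        have e1 : (2:ℕ)^z * (2^(2^z) + 1) + 1 = 2^(z + 2^z) + (2^z + 1) := by
          rw [Nat.mul_add, ← pow_add, mul_one]; omega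
        have e7 : (2:ℕ)^z + 1 ≤ 2^(z + 2^z) := by
          have ha : (2:ℕ)^(z+1) ≤ 2^(z+2^z) := Nat.pow_le_pow_right (by omega) (by omega)
          have hb : (2:ℕ)^(z+1) = 2^z + 2^z := by rw [pow_succ]; ring
          omega
        have e8 : (2:ℕ)^(z+2^z) + 2^(z+2^z) ≤ 2^(2^(z+1)) := by
          have h9 : z + 2^z + 1 ≤ 2^(z+1) := by
            have hb : (2:ℕ)^(z+1) = 2^z + 2^z := by rw [pow_succ]; ring
            omega
          calc (2:ℕ)^(z+2^z) + 2^(z+2^z) = 2^(z+2^z+1) := by rw [pow_succ]; ring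
          _ ≤ _ := Nat.pow_le_pow_right (by omega) h9
        omega
      omega
    have hf₂3 : 3 ≤ f₂ := by
      have : (3:ℕ) ≤ 2 ^ (2^(z+1)) := by
        calc (3:ℕ) ≤ 2^2 := by norm_num
        _ ≤ _ := Nat.pow_le_pow_right (by omega) (by have := (Nat.lt_two_pow_self (n := z+1)); omega)
      omega
    -- decompose f 2
    obtain ⟨hF2ne, g, hg1, hg2, hg3, hg4⟩ := hf1 2 (by omega)
    have hgsubF2 : ∀ t < f₂, g t ⊆ f 2 := by
      intro t ht a ha
      rw [hg4]
      exact Finset.mem_insert_of_mem (Finset.mem_biUnion.2 ⟨t, Finset.mem_range.2 ht, ha⟩)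
    have hgne : ∀ t < f₂, (g t).Nonempty := fun t ht => (hg1 t ht).nonempty
    have hgchain := stack_chain hg2 hgne
    have hzf₂ : z < f₂ := hf3 2 (by omega)
    -- recursive supply on sub-blocks g ((j+1)*(N+1))
    have hrec : ∀ j : ℕ, ∃ Yj : Finset ℕ, j < z →
        Yj ⊆ g ((j+1)*(N+1)) ∧ OmegaLarge c Yj ∧
        ∀ x y, Consec Yj x y → N ≤ ((g ((j+1)*(N+1))) ∩ Finset.Ioc x y).card := by
      intro j
      by_cases hj : j < z
      · have htj : (j+1)*(N+1) < f₂ := by nlinarith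
        have hgt : 3 ≤ fmin (g ((j+1)*(N+1))) := by
          have := hg3 _ htj; omega
        have hNbound : N ≤ 2 ^ (2 ^ (fmin (g ((j+1)*(N+1))))) := by
          have hmono : (2:ℕ) ^ (2^z) ≤ 2 ^ (2 ^ (fmin (g ((j+1)*(N+1))))) := by
            have h1 : z ≤ fmin (g ((j+1)*(N+1))) := by
              have := hg3 _ htj; omega
            exact Nat.pow_le_pow_right (by omega) (Nat.pow_le_pow_right (by omega) h1)
          omega
        obtain ⟨Yj, h1, h2, h3⟩ := ih (g ((j+1)*(N+1))) (hg1 _ htj) hgt N hNbound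
        exact ⟨Yj, fun _ => ⟨h1, h2, h3⟩⟩
      · exact ⟨∅, fun h => absurd h hj⟩
    choose Ysel hYsel using hrec
    have hYsub : ∀ j < z, Ysel j ⊆ g ((j+1)*(N+1)) := fun j hj => (hYsel j hj).1
    have hYlarge : ∀ j < z, OmegaLarge c (Ysel j) := fun j hj => (hYsel j hj).2.1
    have hYfat : ∀ j < z, ∀ x y, Consec (Ysel j) x y →
        N ≤ ((g ((j+1)*(N+1))) ∩ Finset.Ioc x y).card := fun j hj => (hYsel j hj).2.2
    have hYne : ∀ j < z, (Ysel j).Nonempty := fun j hj => (hYlarge j hj).nonempty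
    have htj_lt : ∀ j < z, (j+1)*(N+1) < f₂ := by intro j hj; nlinarith
    have hYlo : ∀ j < z, f₂ < fmin (Ysel j) := by
      intro j hj
      have h1 : fmin (g ((j+1)*(N+1))) ≤ fmin (Ysel j) := fmin_subset (hYsub j hj) (hYne j hj)
      have := hg3 _ (htj_lt j hj)
      omega
    set Y := insert z ((Finset.range z).biUnion Ysel) with hYdef
    have hallge : ∀ a ∈ (Finset.range z).biUnion Ysel, z ≤ a := by
      intro a ha
      rw [Finset.mem_biUnion] at ha
      obtain ⟨j, hj, ha⟩ := ha
      rw [Finset.mem_range] at hj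
      have := hYlo j hj
      have := fmin_le ha
      omega
    have hfminY : fmin Y = z := fmin_insert_of_le hallge
    have hYsubZ : Y ⊆ Z := by
      intro a ha
      rw [hYdef, Finset.mem_insert] at ha
      rcases ha with rfl | ha
      · exact fmin_mem hZne
      · rw [Finset.mem_biUnion] at ha
        obtain ⟨j, hj, ha⟩ := ha
        rw [Finset.mem_range] at hj
        exact hfsubZ 2 (by omega) (hgsubF2 _ (htj_lt j hj) (hYsub j hj ha))
    -- fmax of Ysel j bounded by fmax of its block
    have hYmaxb : ∀ j < z, fmax (Ysel j) ≤ fmax (g ((j+1)*(N+1))) :=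
      fun j hj => fmax_subset (hYsub j hj) (hYne j hj)
    have hYminb : ∀ j < z, fmin (g ((j+1)*(N+1))) ≤ fmin (Ysel j) :=
      fun j hj => fmin_subset (hYsub j hj) (hYne j hj)
    refine ⟨Y, hYsubZ, ?_, ?_⟩
    · -- OmegaLarge (c+1) Y
      refine ⟨⟨z, by rw [hYdef]; exact Finset.mem_insert_self _ _⟩, Ysel, ?_, ?_, ?_, ?_⟩
      · rw [hfminY]; exact hYlarge
      · rw [hfminY]
        intro m hm
        have h1 : fmax (Ysel m) ≤ fmax (g ((m+1)*(N+1))) := hYmaxb m (by omega)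
        have h2 : fmax (g ((m+1)*(N+1))) < fmin (g ((m+2)*(N+1))) := by
          refine hgchain _ _ ?_ (htj_lt (m+1) hm)
          nlinarith
        have h3 : fmin (g ((m+2)*(N+1))) ≤ fmin (Ysel (m+1)) := hYminb (m+1) hm
        omega
      · rw [hfminY]
        intro m hm
        have := hYlo m hm
        omega
      · rw [hfminY]
    · -- fatness
      intro x y hc
      obtain ⟨hx, hy, hlt, hbet⟩ := hc
      have hyne : y ≠ z := by
        rw [← hfminY] at *
        have := fmin_le hx
        omega
      have hymem : ∃ j' < z, y ∈ Ysel j' := by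
        rw [hYdef, Finset.mem_insert] at hy
        rcases hy with h | h
        · exact absurd h hyne
        · rw [Finset.mem_biUnion] at h
          obtain ⟨j, hj, h⟩ := h
          exact ⟨j, Finset.mem_range.1 hj, h⟩
      obtain ⟨j', hj', hyj'⟩ := hymem
      -- helper for the filler argument
      have filler : ∀ (lo : ℕ), lo + N ≤ (j'+1)*(N+1) - 1 →
          (∀ t, lo ≤ t → t < lo + N → x < fmin (g ((t+1)))) → False ∨ True := fun _ _ _ => Or.inr trivial
      -- main case analysis
      have hxmem : x = z ∨ ∃ j < z, x ∈ Ysel j := by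
        rw [hYdef, Finset.mem_insert] at hx
        rcases hx with h | h
        · exact Or.inl h
        · rw [Finset.mem_biUnion] at h
          obtain ⟨j, hj, h⟩ := h
          exact Or.inr ⟨j, Finset.mem_range.1 hj, h⟩
      -- common filler construction
      have hfiller : ∀ (base : ℕ), base + N < (j'+1)*(N+1) →
          (x < fmin (g (base + 1))) ∨ (fmax (g base) ≤ x ∧ base + 1 ≤ base + 1) →
          True := fun _ _ _ => trivial
      -- we do the two cases separately
      have key : ∀ (t0 : ℕ), t0 + N < (j'+1)*(N+1) →
          (∀ t, t0 < t → t ≤ t0 + N → x < fmin (g t)) →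
          N ≤ (Z ∩ Finset.Ioc x y).card := by
        intro t0 ht0 hxlt
        set R := (Finset.Ico (t0+1) (t0+1+N)).image (fun t => fmin (g t)) with hR
        have hRsub : R ⊆ Z ∩ Finset.Ioc x y := by
          intro a ha
          rw [hR, Finset.mem_image] at ha
          obtain ⟨t, ht, rfl⟩ := ha
          rw [Finset.mem_Ico] at ht
          have htf₂ : t < f₂ := by
            have := htj_lt j' hj'
            omega
          have h1 : x < fmin (g t) := hxlt t (by omega) (by omega)
          have h2 : fmin (g t) ≤ y := by
            have ha1 : fmax (g t) < fmin (g ((j'+1)*(N+1))) :=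
              hgchain t _ (by omega) (htj_lt j' hj')
            have ha2 : fmin (g t) ≤ fmax (g t) := fmin_le_fmax (hgne t htf₂)
            have ha3 : fmin (g ((j'+1)*(N+1))) ≤ fmin (Ysel j') := hYminb j' hj'
            have ha4 : fmin (Ysel j') ≤ y := fmin_le hyj'
            omega
          refine Finset.mem_inter.2 ⟨?_, Finset.mem_Ioc.2 ⟨h1, h2⟩⟩
          exact hfsubZ 2 (by omega) (hgsubF2 t htf₂ (fmin_mem (hgne t htf₂)))
        have hRcard : R.card = N := by
          rw [hR]
          rw [Finset.card_image_of_injOn, Nat.card_Ico]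
          · omega
          · intro s hs t ht hst
            have hst' : fmin (g s) = fmin (g t) := hst
            rw [Finset.mem_coe, Finset.mem_Ico] at hs ht
            by_contra hne
            have htj := htj_lt j' hj'
            rcases Nat.lt_or_ge s t with h | h
            · have h1 := hgchain s t h (by omega)
              have h2 := fmin_le_fmax (hgne s (by omega))
              omega
            · have h' : t < s := by omega
              have h1 := hgchain t s h' (by omega)
              have h2 := fmin_le_fmax (hgne t (by omega))
              omega
        calc N = R.card := hRcard.symm
        _ ≤ _ := Finset.card_le_card hRsub
      rcases hxmem with rfl | ⟨j, hj, hxj⟩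
      · -- x = z: fillers g 1 .. g N, i.e. t0 = 0
        have harith : N + 1 ≤ (j'+1)*(N+1) := Nat.le_mul_of_pos_left _ (by omega)
        refine key 0 (by omega) ?_
        intro t ht htN
        have htf₂ : t < f₂ := by
          have := htj_lt j' hj'
          omega
        have := hg3 t htf₂
        omega
      · -- x ∈ Ysel j
        by_cases hjj : j = j'
        · subst hjj
          -- interior pair: use fatness of Ysel j
          have hcj : Consec (Ysel j) x y := by
            refine ⟨hxj, hyj', hlt, fun w hw => ?_⟩
            refine hbet w ?_
            rw [hYdef]
            exact Finset.mem_insert_of_mem (Finset.mem_biUnion.2 ⟨j, Finset.mem_range.2 hj, hw⟩)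
          have h1 := hYfat j hj x y hcj
          have h2 : (g ((j+1)*(N+1))) ∩ Finset.Ioc x y ⊆ Z ∩ Finset.Ioc x y := by
            intro a ha
            rw [Finset.mem_inter] at ha ⊢
            exact ⟨hfsubZ 2 (by omega) (hgsubF2 _ (htj_lt j hj) ha.1), ha.2⟩
          exact le_trans h1 (Finset.card_le_card h2)
        · -- different blocks: j < j'
          have hjlt : j < j' := by
            by_contra hcon
            have hj'j : j' < j := by omega
            have h1 : fmax (g ((j'+1)*(N+1))) < fmin (g ((j+1)*(N+1))) := by
              refine hgchain _ _ ?_ (htj_lt j hj)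
              nlinarith
            have h2 : y ≤ fmax (Ysel j') := le_fmax hyj'
            have h3 := hYmaxb j' hj'
            have h4 := hYminb j hj
            have h5 := fmin_le hxj
            omega
          have harith1 : (j+2)*(N+1) ≤ (j'+1)*(N+1) := Nat.mul_le_mul_right _ (by omega)
          have harith2 : (j+2)*(N+1) = (j+1)*(N+1) + (N+1) := by ring
          refine key ((j+1)*(N+1)) (by omega) ?_
          intro t ht htN
          have h1 : fmax (g ((j+1)*(N+1))) < fmin (g t) := by
            refine hgchain _ _ ht ?_
            have := htj_lt j' hj'
            omega
          have h2 : x ≤ fmax (Ysel j) := le_fmax hxj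
          have h3 := hYmaxb j hj
          omega


-- list helpers
lemma take_eq_of_prefix {σ τ : List Bool} (h : σ <+: τ) : τ.take σ.length = σ :=
  (List.prefix_iff_eq_take.1 h).symm

lemma prefix_take_of_prefix {σ τ : List Bool} (h : σ <+: τ) {n : ℕ} (hn : σ.length ≤ n) :
    σ <+: τ.take n := by
  have h1 : (τ.take n).take σ.length = σ := by
    rw [List.take_take, min_eq_left hn, take_eq_of_prefix h]
  rw [← h1]; exact List.take_prefix _ _

lemma prefix_length_eq {σ τ ζ : List Bool} (h1 : σ <+: ζ) (h2 : τ <+: ζ)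
    (h : σ.length = τ.length) : σ = τ := by
  rw [← take_eq_of_prefix h1, ← take_eq_of_prefix h2, h]

lemma consec_of_consec_erase {Y : Finset ℕ} {x z : ℕ}
    (h : Consec (Y.erase (fmin Y)) x z) (hYne : Y.Nonempty) : Consec Y x z := by
  obtain ⟨hx, hz, hlt, hbet⟩ := h
  refine ⟨Finset.mem_of_mem_erase hx, Finset.mem_of_mem_erase hz, hlt, fun y hy => ?_⟩
  by_cases hy' : y = fmin Y
  · left; subst hy'; exact le_trans (fmin_le (Finset.mem_of_mem_erase hx)) (le_refl x)
  · exact hbet y (Finset.mem_erase.2 ⟨hy', hy⟩)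

lemma fmax_erase_min {Y : Finset ℕ} (hne : (Y.erase (fmin Y)).Nonempty) :
    fmax (Y.erase (fmin Y)) = fmax Y := by
  have hYne : Y.Nonempty := ⟨_, Finset.mem_of_mem_erase hne.choose_spec⟩
  have h1 : fmax (Y.erase (fmin Y)) ≤ fmax Y := fmax_subset (Finset.erase_subset _ _) hne
  have helt : fmin Y < fmin (Y.erase (fmin Y)) := by
    have hm := fmin_mem hne
    have := fmin_le (Finset.mem_of_mem_erase hm)
    have := Finset.ne_of_mem_erase hm
    omega
  have hfm : fmax Y ∈ Y.erase (fmin Y) := by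
    refine Finset.mem_erase.2 ⟨?_, fmax_mem hYne⟩
    have h2 : fmin (Y.erase (fmin Y)) ≤ fmax (Y.erase (fmin Y)) := fmin_le_fmax hne
    have h3 : fmax (Y.erase (fmin Y)) ≤ fmax Y := h1
    omega
  exact le_antisymm h1 (le_fmax hfm)

lemma mem_level {TT : Finset (List Bool)} {x : ℕ} {σ : List Bool} :
    σ ∈ level TT x ↔ σ ∈ TT ∧ σ.length = x := Finset.mem_filter

-- extension count
lemma ext_card {W : Finset ℕ} {TT : Finset (List Bool)} (hQS : QuasiStrong W TT) :
    ∀ n (x z : ℕ) (σ : List Bool), x ∈ W → z ∈ W → x ≤ z → σ ∈ level TT x →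
      (W ∩ Finset.Ioc x z).card = n →
      ((level TT z).filter (fun τ => σ <+: τ)).card = 2 ^ n := by
  intro n
  induction n with
  | zero =>
    intro x z σ hx hz hxz hσ hcard
    have hzx : z = x := by
      by_contra hne
      have hlt : x < z := by omega
      have : z ∈ W ∩ Finset.Ioc x z := Finset.mem_inter.2 ⟨hz, Finset.mem_Ioc.2 ⟨hlt, le_refl z⟩⟩
      have := Finset.card_pos.2 ⟨z, this⟩
      omega
    subst hzx
    have : (level TT z).filter (fun τ => σ <+: τ) = {σ} := by
      ext τ
      simp only [Finset.mem_filter, Finset.mem_singleton]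
      constructor
      · rintro ⟨hτ, hpre⟩
        have h1 : σ.length = z := (mem_level.1 hσ).2
        have h2 : τ.length = z := (mem_level.1 hτ).2
        exact (prefix_length_eq hpre (List.prefix_refl τ) (by omega)).symm
      · rintro rfl
        exact ⟨hσ, List.prefix_refl _⟩
    rw [this, Finset.card_singleton, pow_zero]
  | succ n ih =>
    intro x z σ hx hz hxz hσ hcard
    set S₀ := W ∩ Finset.Ioc x z with hS₀
    have hS₀ne : S₀.Nonempty := Finset.card_pos.1 (by omega)
    set u := fmin S₀ with hu
    have huS₀ : u ∈ S₀ := fmin_mem hS₀ne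
    have huW : u ∈ W := (Finset.mem_inter.1 huS₀).1
    have huIoc : x < u ∧ u ≤ z := Finset.mem_Ioc.1 (Finset.mem_inter.1 huS₀).2
    have hconsec : Consec W x u := by
      refine ⟨hx, huW, huIoc.1, fun y hy => ?_⟩
      by_cases h1 : y ≤ x
      · left; exact h1
      · right
        by_contra h2
        push_neg at h2
        have : y ∈ S₀ := Finset.mem_inter.2 ⟨hy, Finset.mem_Ioc.2 ⟨by omega, by omega⟩⟩
        have := fmin_le this
        omega
    have herase : W ∩ Finset.Ioc u z = S₀.erase u := by
      ext a
      simp only [Finset.mem_erase, Finset.mem_inter, Finset.mem_Ioc, hS₀]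
      constructor
      · rintro ⟨haW, h1, h2⟩
        exact ⟨by omega, haW, by omega, h2⟩
      · rintro ⟨hne, haW, h1, h2⟩
        have : a ∈ S₀ := Finset.mem_inter.2 ⟨haW, Finset.mem_Ioc.2 ⟨h1, h2⟩⟩
        have := fmin_le this
        refine ⟨haW, ?_, h2⟩
        rcases Nat.lt_or_ge u a with h | h
        · exact h
        · exfalso; rw [← hu] at *; omega
    have herasecard : (W ∩ Finset.Ioc u z).card = n := by
      rw [herase, Finset.card_erase_of_mem huS₀]
      omega
    have hsplit : (level TT z).filter (fun τ => σ <+: τ) =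
        ((level TT u).filter (fun τ => σ <+: τ)).biUnion
          (fun τ => (level TT z).filter (fun ζ => τ <+: ζ)) := by
      ext ζ
      simp only [Finset.mem_biUnion, Finset.mem_filter]
      constructor
      · rintro ⟨hζ, hpre⟩
        have hζTT : ζ ∈ TT := (mem_level.1 hζ).1
        have hζlen : ζ.length = z := (mem_level.1 hζ).2
        refine ⟨ζ.take u, ⟨mem_level.2 ⟨hQS.1 ζ hζTT _ (List.take_prefix _ _), ?_⟩, ?_⟩, hζ,
          List.take_prefix _ _⟩
        · rw [List.length_take, hζlen]; omega
        · have h1 : σ.length = x := (mem_level.1 hσ).2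
          exact prefix_take_of_prefix hpre (by omega)
      · rintro ⟨τ, ⟨hτl, hpre1⟩, hζ, hpre2⟩
        exact ⟨hζ, hpre1.trans hpre2⟩
    rw [hsplit]
    rw [Finset.card_biUnion]
    · have hall : ∀ τ ∈ (level TT u).filter (fun τ => σ <+: τ),
          ((level TT z).filter (fun ζ => τ <+: ζ)).card = 2 ^ n := by
        intro τ hτ
        have hτlevel : τ ∈ level TT u := Finset.mem_filter.1 hτ |>.1
        exact ih u z τ huW hz huIoc.2 hτlevel herasecard
      rw [Finset.sum_congr rfl hall]
      have h2 : ((level TT u).filter (fun τ => σ <+: τ)).card = 2 := hQS.2.2 x u hconsec σ hσ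
      rw [Finset.sum_const, h2, smul_eq_mul, pow_succ]
      ring
    · intro τ hτ τ' hτ' hne
      rw [Function.onFun, Finset.disjoint_left]
      intro ζ hζ hζ'
      have h1 := Finset.mem_filter.1 hζ
      have h2 := Finset.mem_filter.1 hζ'
      have hτu : τ.length = u := (mem_level.1 (Finset.mem_filter.1 hτ).1).2
      have hτ'u : τ'.length = u := (mem_level.1 (Finset.mem_filter.1 hτ').1).2
      exact hne (prefix_length_eq h1.2 h2.2 (by omega))

-- Good predicate by well-founded recursion
def GoodT (TT : Finset (List Bool)) (C : List Bool → ℕ) (w : ℕ)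
    (Y : Finset ℕ) (σ : List Bool) (c : ℕ) : Prop :=
  if h : (Y.erase (fmin Y)).Nonempty then
    ∃ τ₁ ∈ (level TT (fmin (Y.erase (fmin Y)))).filter (fun τ => σ <+: τ),
      ∃ τ₂ ∈ (level TT (fmin (Y.erase (fmin Y)))).filter (fun τ => σ <+: τ),
        τ₁ ≠ τ₂ ∧ GoodT TT C w (Y.erase (fmin Y)) τ₁ c ∧ GoodT TT C w (Y.erase (fmin Y)) τ₂ c
  else ∃ τ ∈ (level TT w), σ <+: τ ∧ C τ = c
termination_by Y.card
decreasing_by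
  all_goals
    exact Finset.card_erase_lt_of_mem (fmin_mem ⟨_, Finset.mem_of_mem_erase h.choose_spec⟩)

lemma goodT_pos {TT C w Y σ c} (h : (Y.erase (fmin Y)).Nonempty) :
    GoodT TT C w Y σ c ↔
    ∃ τ₁ ∈ (level TT (fmin (Y.erase (fmin Y)))).filter (fun τ => σ <+: τ),
      ∃ τ₂ ∈ (level TT (fmin (Y.erase (fmin Y)))).filter (fun τ => σ <+: τ),
        τ₁ ≠ τ₂ ∧ GoodT TT C w (Y.erase (fmin Y)) τ₁ c ∧ GoodT TT C w (Y.erase (fmin Y)) τ₂ c := by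
  rw [GoodT]
  rw [dif_pos h]

lemma goodT_neg {TT C w Y σ c} (h : ¬ (Y.erase (fmin Y)).Nonempty) :
    GoodT TT C w Y σ c ↔ ∃ τ ∈ (level TT w), σ <+: τ ∧ C τ = c := by
  rw [GoodT]
  rw [dif_neg h]

lemma existsGood {W : Finset ℕ} {TT : Finset (List Bool)} {C : List Bool → ℕ} {k T : ℕ}
    (hQS : QuasiStrong W TT) (hC : ∀ σ ∈ level TT (fmax W), C σ < k)
    (hkT : k < 2 ^ T) (hWne : W.Nonempty) :
    ∀ n (Y : Finset ℕ), Y.card ≤ n → Y ⊆ W → Y.Nonempty →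
      (∀ x z, Consec Y x z → T ≤ (W ∩ Finset.Ioc x z).card) →
      ∀ σ ∈ level TT (fmin Y), ∃ c < k, GoodT TT C (fmax W) Y σ c := by
  intro n
  induction n with
  | zero =>
    intro Y hcard hYW hYne
    exfalso
    have := Finset.card_pos.2 hYne
    omega
  | succ n ih =>
    intro Y hcard hYW hYne hfat σ hσ
    classical
    by_cases hY' : (Y.erase (fmin Y)).Nonempty
    · -- recursive case
      set Y' := Y.erase (fmin Y) with hY'def
      set y1 := fmin Y' with hy1
      have hcons : Consec Y (fmin Y) y1 := consec_min hY'
      have hy1W : y1 ∈ W := hYW hcons.2.1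
      have hy0W : fmin Y ∈ W := hYW (fmin_mem hYne)
      have hfat1 : T ≤ (W ∩ Finset.Ioc (fmin Y) y1).card := hfat _ _ hcons
      set children := (level TT y1).filter (fun τ => σ <+: τ) with hch
      have hchcard : children.card = 2 ^ ((W ∩ Finset.Ioc (fmin Y) y1).card) :=
        ext_card hQS _ (fmin Y) y1 σ hy0W hy1W (le_of_lt hcons.2.2.1) hσ rfl
      have hchbig : k < children.card := by
        rw [hchcard]
        calc k < 2 ^ T := hkT
        _ ≤ _ := Nat.pow_le_pow_right (by omega) hfat1
      have hrec : ∀ τ ∈ children, ∃ c, c < k ∧ GoodT TT C (fmax W) Y' τ c := by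
        intro τ hτ
        have hτlevel : τ ∈ level TT y1 := (Finset.mem_filter.1 hτ).1
        have hYcard : Y'.card ≤ n := by
          rw [hY'def]
          have := Finset.card_erase_lt_of_mem (fmin_mem hYne)
          omega
        have hY'fat : ∀ x z, Consec Y' x z → T ≤ (W ∩ Finset.Ioc x z).card :=
          fun x z hc => hfat x z (consec_of_consec_erase hc hYne)
        obtain ⟨c, hc1, hc2⟩ := ih Y' hYcard (fun a ha => hYW (Finset.mem_of_mem_erase ha))
          hY' hY'fat τ hτlevel
        exact ⟨c, hc1, hc2⟩
      set F : List Bool → ℕ := fun τ => if h : τ ∈ children then (hrec τ h).choose else 0 with hF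
      have hmaps : ∀ τ ∈ children, F τ ∈ Finset.range k := by
        intro τ hτ
        rw [hF]
        simp only [dif_pos hτ]
        exact Finset.mem_range.2 (hrec τ hτ).choose_spec.1
      have hlt : (Finset.range k).card < children.card := by
        rw [Finset.card_range]; exact hchbig
      obtain ⟨τ₁, hτ₁, τ₂, hτ₂, hne, hFeq⟩ :=
        Finset.exists_ne_map_eq_of_card_lt_of_maps_to hlt hmaps
      have hg₁ : GoodT TT C (fmax W) Y' τ₁ (F τ₁) := by
        rw [hF]; simp only [dif_pos hτ₁]
        exact (hrec τ₁ hτ₁).choose_spec.2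
      have hg₂ : GoodT TT C (fmax W) Y' τ₂ (F τ₁) := by
        rw [hFeq, hF]; simp only [dif_pos hτ₂]
        exact (hrec τ₂ hτ₂).choose_spec.2
      have hFlt : F τ₁ < k := by
        have := hmaps τ₁ hτ₁
        exact Finset.mem_range.1 this
      refine ⟨F τ₁, hFlt, ?_⟩
      rw [goodT_pos hY']
      exact ⟨τ₁, hτ₁, τ₂, hτ₂, hne, hg₁, hg₂⟩
    · -- base case
      have hy0W : fmin Y ∈ W := hYW (fmin_mem hYne)
      have hwW : fmax W ∈ W := fmax_mem hWne
      have hle : fmin Y ≤ fmax W := le_fmax hy0W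
      have hcard' : ((level TT (fmax W)).filter (fun τ => σ <+: τ)).card =
          2 ^ ((W ∩ Finset.Ioc (fmin Y) (fmax W)).card) :=
        ext_card hQS _ (fmin Y) (fmax W) σ hy0W hwW hle hσ rfl
      have hpos : 0 < ((level TT (fmax W)).filter (fun τ => σ <+: τ)).card := by
        rw [hcard']; exact Nat.pow_pos (by omega)
      obtain ⟨τ, hτ⟩ := Finset.card_pos.1 hpos
      have hτlevel : τ ∈ level TT (fmax W) := (Finset.mem_filter.1 hτ).1
      have hpre : σ <+: τ := (Finset.mem_filter.1 hτ).2
      refine ⟨C τ, hC τ hτlevel, ?_⟩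
      rw [goodT_neg hY']
      exact ⟨τ, hτlevel, hpre, rfl⟩

lemma buildTops {W : Finset ℕ} {TT : Finset (List Bool)} {C : List Bool → ℕ}
    (hQS : QuasiStrong W TT) (hWne : W.Nonempty) :
    ∀ n (Y : Finset ℕ), Y.card ≤ n → Y ⊆ W → Y.Nonempty →
      ∀ σ ∈ level TT (fmin Y), ∀ c, GoodT TT C (fmax W) Y σ c →
      ∃ Tops : Finset (List Bool), Tops.Nonempty ∧ Tops ⊆ level TT (fmax Y) ∧
        (∀ τ ∈ Tops, σ <+: τ) ∧
        (∀ τ ∈ Tops, ∃ ζ ∈ level TT (fmax W), τ <+: ζ ∧ C ζ = c) ∧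
        (∀ x z, Consec Y x z → ∀ ρ ∈ Tops.image (fun τ => τ.take x),
          ((Tops.image (fun τ => τ.take z)).filter (fun τ' => ρ <+: τ')).card = 2) := by
  intro n
  induction n with
  | zero =>
    intro Y hcard hYW hYne
    exfalso
    have := Finset.card_pos.2 hYne
    omega
  | succ n ih =>
    intro Y hcard hYW hYne σ hσ c hGood
    classical
    by_cases hY' : (Y.erase (fmin Y)).Nonempty
    · -- recursive case
      set Y' := Y.erase (fmin Y) with hY'def
      set y1 := fmin Y' with hy1def
      have hy0len : σ.length = fmin Y := (mem_level.1 hσ).2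
      rw [goodT_pos hY'] at hGood
      obtain ⟨τ₁, hτ₁, τ₂, hτ₂, hne, hg₁, hg₂⟩ := hGood
      have hτ₁level : τ₁ ∈ level TT y1 := (Finset.mem_filter.1 hτ₁).1
      have hτ₂level : τ₂ ∈ level TT y1 := (Finset.mem_filter.1 hτ₂).1
      have hτ₁pre : σ <+: τ₁ := (Finset.mem_filter.1 hτ₁).2
      have hτ₂pre : σ <+: τ₂ := (Finset.mem_filter.1 hτ₂).2
      have hτ₁len : τ₁.length = y1 := (mem_level.1 hτ₁level).2
      have hτ₂len : τ₂.length = y1 := (mem_level.1 hτ₂level).2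
      have hY'card : Y'.card ≤ n := by
        rw [hY'def]
        have := Finset.card_erase_lt_of_mem (fmin_mem hYne)
        omega
      have hY'W : Y' ⊆ W := fun a ha => hYW (Finset.mem_of_mem_erase ha)
      obtain ⟨Tops₁, h1ne, h1lev, h1pre, h1leaf, h1card⟩ :=
        ih Y' hY'card hY'W hY' τ₁ hτ₁level c hg₁
      obtain ⟨Tops₂, h2ne, h2lev, h2pre, h2leaf, h2card⟩ :=
        ih Y' hY'card hY'W hY' τ₂ hτ₂level c hg₂
      have hfmax' : fmax Y' = fmax Y := fmax_erase_min hY'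
      rw [hfmax'] at h1lev h2lev
      have hy1x : ∀ x ∈ Y', y1 ≤ x := fun x hx => fmin_le hx
      -- all tops have length fmax Y and extend τᵢ
      have h1len : ∀ τ ∈ Tops₁, τ.length = fmax Y := fun τ hτ => (mem_level.1 (h1lev hτ)).2
      have h2len : ∀ τ ∈ Tops₂, τ.length = fmax Y := fun τ hτ => (mem_level.1 (h2lev hτ)).2
      refine ⟨Tops₁ ∪ Tops₂, h1ne.mono Finset.subset_union_left, ?_, ?_, ?_, ?_⟩
      · exact Finset.union_subset h1lev h2lev
      · intro τ hτ
        rcases Finset.mem_union.1 hτ with h | h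
        · exact hτ₁pre.trans (h1pre τ h)
        · exact hτ₂pre.trans (h2pre τ h)
      · intro τ hτ
        rcases Finset.mem_union.1 hτ with h | h
        · exact h1leaf τ h
        · exact h2leaf τ h
      · -- the branching condition
        intro x z hcons ρ hρ
        by_cases hx0 : x = fmin Y
        · -- bottom pair
          subst hx0
          obtain ⟨-, hz⟩ := consec_min_eq hcons
          rw [← hy1def] at hz
          subst hz
          -- image at level y1 is {τ₁, τ₂}
          have himg : (Tops₁ ∪ Tops₂).image (fun τ => τ.take y1) = {τ₁, τ₂} := by
            ext a
            simp only [Finset.mem_image, Finset.mem_union, Finset.mem_insert, Finset.mem_singleton]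
            constructor
            · rintro ⟨τ, hτ, rfl⟩
              rcases hτ with h | h
              · left
                rw [← hτ₁len]
                exact take_eq_of_prefix (h1pre τ h)
              · right
                rw [← hτ₂len]
                exact take_eq_of_prefix (h2pre τ h)
            · rintro (rfl | rfl)
              · obtain ⟨τ, hτ⟩ := h1ne
                exact ⟨τ, Or.inl hτ, by rw [← hτ₁len]; exact take_eq_of_prefix (h1pre τ hτ)⟩
              · obtain ⟨τ, hτ⟩ := h2ne
                exact ⟨τ, Or.inr hτ, by rw [← hτ₂len]; exact take_eq_of_prefix (h2pre τ hτ)⟩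
          have hρσ : ρ = σ := by
            rw [Finset.mem_image] at hρ
            obtain ⟨τ, hτ, rfl⟩ := hρ
            have hpre : σ <+: τ := by
              rcases Finset.mem_union.1 hτ with h | h
              · exact hτ₁pre.trans (h1pre τ h)
              · exact hτ₂pre.trans (h2pre τ h)
            rw [← hy0len]
            exact take_eq_of_prefix hpre
          subst hρσ
          rw [himg]
          have hfilter : ({τ₁, τ₂} : Finset (List Bool)).filter (fun τ' => ρ <+: τ') = {τ₁, τ₂} := by
            refine Finset.filter_true_of_mem ?_
            intro a ha
            rcases Finset.mem_insert.1 ha with rfl | ha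
            · exact hτ₁pre
            · rw [Finset.mem_singleton] at ha; subst ha; exact hτ₂pre
          rw [hfilter]
          exact Finset.card_pair hne
        · -- upper pair: inside Y'
          have hconsY' : Consec Y' x z := consec_erase hcons hx0
          have hxY' : x ∈ Y' := hconsY'.1
          have hy1x' : y1 ≤ x := fmin_le hxY'
          have hy1z : y1 ≤ z := fmin_le hconsY'.2.1
          -- key side lemma
          have side : ∀ (A B : Finset (List Bool)) (τa τb : List Bool),
              τa.length = y1 → τb.length = y1 → τa ≠ τb →
              (∀ τ ∈ A, τa <+: τ) → (∀ τ ∈ B, τb <+: τ) →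
              (∀ x' z', Consec Y' x' z' → ∀ ρ' ∈ A.image (fun τ => τ.take x'),
                ((A.image (fun τ => τ.take z')).filter (fun τ' => ρ' <+: τ')).card = 2) →
              ∀ ρ' ∈ A.image (fun τ => τ.take x),
              (((A ∪ B).image (fun τ => τ.take z)).filter (fun τ' => ρ' <+: τ')).card = 2 := by
            intro A B τa τb hlena hlenb hneab hpreA hpreB hcardA ρ' hρ'
            have himg : (A ∪ B).image (fun τ => τ.take z) =
                A.image (fun τ => τ.take z) ∪ B.image (fun τ => τ.take z) :=
              Finset.image_union _ _
            rw [himg, Finset.filter_union]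
            have hBempty : (B.image (fun τ => τ.take z)).filter (fun τ' => ρ' <+: τ') = ∅ := by
              rw [Finset.filter_eq_empty_iff]
              intro ζ hζ
              rw [Finset.mem_image] at hζ
              obtain ⟨τ, hτ, rfl⟩ := hζ
              intro hcon
              -- ρ' extends τa, τ.take z extends τb
              obtain ⟨τ', hτ', rfl⟩ := Finset.mem_image.1 hρ'
              have hpa : τa <+: τ'.take x :=
                prefix_take_of_prefix (hpreA τ' hτ') (by omega)
              have hpb : τb <+: τ.take z :=
                prefix_take_of_prefix (hpreB τ hτ) (by omega)
              have : τa <+: τ.take z := hpa.trans hcon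
              exact hneab (prefix_length_eq this hpb (by omega))
            rw [hBempty, Finset.union_empty]
            exact hcardA x z hconsY' ρ' hρ'
          rw [Finset.image_union] at hρ
          rcases Finset.mem_union.1 hρ with h | h
          · exact side Tops₁ Tops₂ τ₁ τ₂ hτ₁len hτ₂len hne h1pre h2pre h1card ρ h
          · rw [Finset.union_comm]
            exact side Tops₂ Tops₁ τ₂ τ₁ hτ₂len hτ₁len (Ne.symm hne) h2pre h1pre h2card ρ h
    · -- base case: Y is a singleton {fmin Y}
      have hYsingle : Y = {fmin Y} := by
        ext a
        rw [Finset.mem_singleton]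
        constructor
        · intro ha
          by_contra hne
          exact hY' ⟨a, Finset.mem_erase.2 ⟨hne, ha⟩⟩
        · rintro rfl; exact fmin_mem hYne
      have hfmaxY : fmax Y = fmin Y := by
        rw [hYsingle]
        rfl
      rw [goodT_neg hY'] at hGood
      obtain ⟨ζ, hζ, hpre, hCζ⟩ := hGood
      refine ⟨{σ}, ⟨σ, Finset.mem_singleton_self σ⟩, ?_, ?_, ?_, ?_⟩
      · intro τ hτ
        rw [Finset.mem_singleton] at hτ
        subst hτ
        rw [hfmaxY]
        exact hσ
      · intro τ hτ
        rw [Finset.mem_singleton] at hτ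
        subst hτ
        exact List.prefix_refl _
      · intro τ hτ
        rw [Finset.mem_singleton] at hτ
        subst hτ
        exact ⟨ζ, hζ, hpre, hCζ⟩
      · intro x z hcons
        exfalso
        rw [hYsingle] at hcons
        obtain ⟨hx, hz, hlt, -⟩ := hcons
        rw [Finset.mem_singleton] at hx hz
        omega

lemma treeLemma {k T : ℕ} {W Y : Finset ℕ} (hYW : Y ⊆ W) (hYne : Y.Nonempty)
    (hkT : k < 2 ^ T)
    (hfat : ∀ x z, Consec Y x z → T ≤ (W ∩ Finset.Ioc x z).card) :
    PersClause k W Y := by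
  intro TT hQS C hC
  classical
  have hWne : W.Nonempty := ⟨_, hYW (fmin_mem hYne)⟩
  have hy0W : fmin Y ∈ W := hYW (fmin_mem hYne)
  obtain ⟨σ, hσ⟩ := hQS.2.1 (fmin Y) hy0W
  obtain ⟨c, hck, hGood⟩ :=
    existsGood hQS hC hkT hWne Y.card Y (le_refl _) hYW hYne hfat σ hσ
  obtain ⟨Tops, hTne, hTlev, hTpre, hTleaf, hTcard⟩ :=
    buildTops hQS hWne Y.card Y (le_refl _) hYW hYne σ hσ c hGood
  have hToplen : ∀ τ ∈ Tops, τ.length = fmax Y := fun τ hτ => (mem_level.1 (hTlev hτ)).2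
  have hTopTT : ∀ τ ∈ Tops, τ ∈ TT := fun τ hτ => (mem_level.1 (hTlev hτ)).1
  set S := Tops.biUnion (fun τ => (Finset.range (τ.length + 1)).image (fun m => τ.take m)) with hS
  have memS : ∀ ρ, ρ ∈ S ↔ ∃ τ ∈ Tops, ρ <+: τ := by
    intro ρ
    rw [hS]
    simp only [Finset.mem_biUnion, Finset.mem_image, Finset.mem_range]
    constructor
    · rintro ⟨τ, hτ, m, hm, rfl⟩
      exact ⟨τ, hτ, List.take_prefix _ _⟩
    · rintro ⟨τ, hτ, hpre⟩
      refine ⟨τ, hτ, ρ.length, ?_, (take_eq_of_prefix hpre)⟩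
      have := hpre.length_le
      omega
  have hSsubTT : S ⊆ TT := by
    intro ρ hρ
    obtain ⟨τ, hτ, hpre⟩ := (memS ρ).1 hρ
    exact hQS.1 τ (hTopTT τ hτ) ρ hpre
  have hlevelS : ∀ x, x ≤ fmax Y → level S x = Tops.image (fun τ => τ.take x) := by
    intro x hx
    ext ρ
    rw [mem_level, Finset.mem_image]
    constructor
    · rintro ⟨hρS, hρlen⟩
      obtain ⟨τ, hτ, hpre⟩ := (memS ρ).1 hρS
      exact ⟨τ, hτ, by rw [← hρlen]; exact take_eq_of_prefix hpre⟩
    · rintro ⟨τ, hτ, rfl⟩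
      constructor
      · rw [memS]
        exact ⟨τ, hτ, List.take_prefix _ _⟩
      · rw [List.length_take, hToplen τ hτ]
        omega
  refine ⟨c, hck, S, hSsubTT, ⟨?_, ?_, ?_⟩, ?_⟩
  · -- IsTree S
    intro ρ hρ ρ' hpre'
    rw [memS] at hρ ⊢
    obtain ⟨τ, hτ, hpre⟩ := hρ
    exact ⟨τ, hτ, hpre'.trans hpre⟩
  · -- levels nonempty
    intro x hx
    have hxle : x ≤ fmax Y := le_fmax hx
    rw [hlevelS x hxle]
    exact hTne.image _
  · -- branching
    intro x z hcons ρ hρ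
    have hxle : x ≤ fmax Y := le_fmax hcons.1
    have hzle : z ≤ fmax Y := le_fmax hcons.2.1
    rw [hlevelS x hxle] at hρ
    rw [hlevelS z hzle]
    exact hTcard x z hcons ρ hρ
  · -- leaves
    intro ρ hleaf
    obtain ⟨hρS, hmax⟩ := hleaf
    obtain ⟨τ, hτ, hpre⟩ := (memS ρ).1 hρS
    have hτS : τ ∈ S := (memS τ).2 ⟨τ, hτ, List.prefix_refl _⟩
    have : τ = ρ := hmax τ hτS hpre
    subst this
    exact hTleaf τ hτ


-- dropTop
def dropTop : ℕ → Finset ℕ → Finset ℕ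
  | 0, A => A
  | t+1, A => dropTop t (A.erase (fmax A))

lemma dropTop_subset : ∀ t (A : Finset ℕ), dropTop t A ⊆ A := by
  intro t
  induction t with
  | zero => intro A; exact Finset.Subset.refl A
  | succ t ih =>
    intro A
    exact (ih (A.erase (fmax A))).trans (Finset.erase_subset _ _)

lemma dropTop_card : ∀ t (A : Finset ℕ), t ≤ A.card → (dropTop t A).card = A.card - t := by
  intro t
  induction t with
  | zero => intro A _; simp [dropTop]
  | succ t ih =>
    intro A hA
    have hAne : A.Nonempty := Finset.card_pos.1 (by omega)
    have hmax : fmax A ∈ A := fmax_mem hAne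
    have hcard : (A.erase (fmax A)).card = A.card - 1 := Finset.card_erase_of_mem hmax
    show (dropTop t (A.erase (fmax A))).card = A.card - (t+1)
    rw [ih _ (by omega), hcard]
    omega

lemma dropTop_lt : ∀ t (A : Finset ℕ), ∀ e ∈ dropTop t A, ∀ a ∈ A, a ∉ dropTop t A → e < a := by
  intro t
  induction t with
  | zero => intro A e he a ha hna; exact absurd ha hna
  | succ t ih =>
    intro A e he a ha hna
    show e < a
    by_cases haE : a ∈ A.erase (fmax A)
    · exact ih (A.erase (fmax A)) e he a haE hna
    · have : a = fmax A := by
        by_contra hne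
        exact haE (Finset.mem_erase.2 ⟨hne, ha⟩)
      subst this
      have heE : e ∈ A.erase (fmax A) := dropTop_subset t _ he
      have h1 := Finset.mem_erase.1 heE
      have h2 : e ≤ fmax A := le_fmax h1.2
      omega

lemma gridLemma {T : ℕ} (hT : 1 ≤ T) :
    ∀ m (A : Finset ℕ), A.Nonempty → (m+1) * T ≤ A.card →
    ∃ E, E ⊆ A ∧ fmax A ∈ E ∧ E.card = m + 1 ∧
      T ≤ (A.filter (fun a => a ≤ fmin E)).card ∧
      ∀ x z, Consec E x z → T ≤ (A ∩ Finset.Ioc x z).card := by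
  intro m
  induction m with
  | zero =>
    intro A hAne hAcard
    refine ⟨{fmax A}, ?_, Finset.mem_singleton_self _, Finset.card_singleton _, ?_, ?_⟩
    · intro a ha; rw [Finset.mem_singleton] at ha; subst ha; exact fmax_mem hAne
    · have : A.filter (fun a => a ≤ fmin {fmax A}) = A := by
        refine Finset.filter_true_of_mem ?_
        intro a ha
        have : fmin ({fmax A} : Finset ℕ) = fmax A := by
          have h1 : fmax A ∈ ({fmax A} : Finset ℕ) := Finset.mem_singleton_self _
          have h2 := fmin_le h1
          have h3 := fmin_mem (⟨fmax A, h1⟩ : ({fmax A} : Finset ℕ).Nonempty)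
          rw [Finset.mem_singleton] at h3
          omega
        rw [this]
        exact le_fmax ha
      rw [this]; omega
    · intro x z hc
      obtain ⟨hx, hz, hlt, -⟩ := hc
      rw [Finset.mem_singleton] at hx hz
      omega
  | succ m ih =>
    intro A hAne hAcard
    have hmt : (m+1+1)*T = (m+1)*T + T := by ring
    have hTm : T ≤ (m+1)*T := Nat.le_mul_of_pos_left T (by omega)
    set A' := dropTop T A with hA'
    have hA'sub : A' ⊆ A := dropTop_subset T A
    have hA'card : A'.card = A.card - T := dropTop_card T A (by omega)
    have hA'ne : A'.Nonempty := by
      rw [← Finset.card_pos, hA'card]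
      omega
    have hA'le : (m+1) * T ≤ A'.card := by
      rw [hA'card]
      omega
    obtain ⟨E', hE'sub, hE'max, hE'card, hE'bot, hE'gap⟩ := ih A' hA'ne hA'le
    have hmaxA'A : fmax A' ∈ A' := fmax_mem hA'ne
    have hmaxnotin : fmax A ∉ A' := by
      intro hcon
      have hsd : (A \ A').Nonempty := by
        rw [← Finset.card_pos, Finset.card_sdiff_of_subset hA'sub]
        omega
      obtain ⟨a, ha⟩ := hsd
      rw [Finset.mem_sdiff] at ha
      have := dropTop_lt T A (fmax A) hcon a ha.1 ha.2
      have := le_fmax ha.1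
      omega
    have hmaxlt : fmax A' < fmax A := by
      have h1 : fmax A' ≤ fmax A := le_fmax (hA'sub hmaxA'A)
      have h2 : fmax A' ≠ fmax A := by
        intro hcon
        rw [← hcon] at hmaxnotin
        exact hmaxnotin hmaxA'A
      omega
    have hE'lt : ∀ e ∈ E', e < fmax A := by
      intro e he
      have h1 : e ≤ fmax A' := le_fmax (hE'sub he)
      omega
    have hmaxnotE' : fmax A ∉ E' := fun h => lt_irrefl _ (hE'lt _ h)
    have hE'ne : E'.Nonempty := Finset.card_pos.1 (by rw [hE'card]; omega)
    set E := insert (fmax A) E' with hE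
    have hEne : E.Nonempty := ⟨fmax A, Finset.mem_insert_self _ _⟩
    have hfminE : fmin E = fmin E' := by
      have h1 : fmin E ≤ fmin E' := fmin_le (Finset.mem_insert_of_mem (fmin_mem hE'ne))
      have h2 : fmin E ∈ E := fmin_mem hEne
      rcases Finset.mem_insert.1 h2 with h | h
      · exfalso
        have h3 : fmin E' < fmax A := hE'lt _ (fmin_mem hE'ne)
        omega
      · have := fmin_le (X := E') h
        omega
    have hsdcount : T ≤ (A ∩ Finset.Ioc (fmax A') (fmax A)).card := by
      have hsub : A \ A' ⊆ A ∩ Finset.Ioc (fmax A') (fmax A) := by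
        intro a ha
        rw [Finset.mem_sdiff] at ha
        refine Finset.mem_inter.2 ⟨ha.1, Finset.mem_Ioc.2 ⟨?_, le_fmax ha.1⟩⟩
        exact dropTop_lt T A (fmax A') hmaxA'A a ha.1 ha.2
      have hcd : (A \ A').card = T := by
        rw [Finset.card_sdiff_of_subset hA'sub]
        omega
      rw [← hcd]
      exact Finset.card_le_card hsub
    refine ⟨E, ?_, Finset.mem_insert_self _ _, ?_, ?_, ?_⟩
    · intro a ha
      rcases Finset.mem_insert.1 ha with rfl | ha
      · exact fmax_mem hAne
      · exact hA'sub (hE'sub ha)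
    · rw [hE, Finset.card_insert_of_notMem hmaxnotE', hE'card]
    · rw [hfminE]
      have hsub : A'.filter (fun a => a ≤ fmin E') ⊆ A.filter (fun a => a ≤ fmin E') :=
        Finset.filter_subset_filter _ hA'sub
      exact le_trans hE'bot (Finset.card_le_card hsub)
    · intro x z hc
      by_cases hz : z = fmax A
      · subst hz
        have hxE : x ∈ E := hc.1
        have hxltz : x < fmax A := hc.2.2.1
        have hxE' : x ∈ E' := by
          rcases Finset.mem_insert.1 hxE with h | h
          · omega
          · exact h
        have hx1 : fmax A' ≤ x ∨ fmax A ≤ fmax A' :=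
          hc.2.2.2 (fmax A') (Finset.mem_insert_of_mem hE'max)
        have hx2 : x ≤ fmax A' := le_fmax (hE'sub hxE')
        have hxeq : x = fmax A' := by omega
        subst hxeq
        exact hsdcount
      · have hzE' : z ∈ E' := by
          rcases Finset.mem_insert.1 hc.2.1 with h | h
          · exact absurd h hz
          · exact h
        have hxE' : x ∈ E' := by
          rcases Finset.mem_insert.1 hc.1 with h | h
          · exfalso
            have := hE'lt z hzE'
            have := hc.2.2.1
            omega
          · exact h
        have hcE' : Consec E' x z :=
          consec_subset (fun a ha => Finset.mem_insert_of_mem ha) hc hxE' hzE'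
        have h1 := hE'gap x z hcE'
        have hsub : A' ∩ Finset.Ioc x z ⊆ A ∩ Finset.Ioc x z :=
          Finset.inter_subset_inter hA'sub (Finset.Subset.refl _)
        exact le_trans h1 (Finset.card_le_card hsub)

lemma chainLemma {d k T : ℕ} (hT : 1 ≤ T) (hkT : k < 2 ^ T) :
    ∀ i (X Y : Finset ℕ), Y ⊆ X → 1 ≤ fmin X → OmegaLarge d Y →
      (∀ x z, Consec Y x z → T ^ i ≤ (X ∩ Finset.Ioc x z).card) →
      Persistent d 1 k i X := by
  intro i
  induction i with
  | zero =>
    intro X Y hYX hX1 hYlarge hfat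
    simp only [Persistent]
    have hXlarge : OmegaLarge d X := omegaLarge_superset d hYlarge hYX hX1
    refine ⟨fun _ => X, fun m _ => hXlarge, fun m hm => absurd hm (by omega), ?_⟩
    rw [Finset.range_one, Finset.singleton_biUnion]
  | succ i ih =>
    intro X Y hYX hX1 hYlarge hfat
    classical
    have hYne : Y.Nonempty := hYlarge.nonempty
    set pairs := (Y ×ˢ Y).filter (fun p => Consec Y p.1 p.2) with hpairs
    have hmem_pairs : ∀ p : ℕ × ℕ, p ∈ pairs ↔ Consec Y p.1 p.2 := by
      intro p
      rw [hpairs, Finset.mem_filter, Finset.mem_product]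
      constructor
      · exact fun h => h.2
      · intro h; exact ⟨⟨h.1, h.2.1⟩, h⟩
    -- grid selection for each pair
    have hEex : ∀ p : ℕ × ℕ, ∃ E : Finset ℕ, Consec Y p.1 p.2 →
        E ⊆ X ∩ Finset.Ioc p.1 p.2 ∧ p.2 ∈ E ∧ E.card = T ^ i ∧
        T ≤ ((X ∩ Finset.Ioc p.1 p.2).filter (fun a => a ≤ fmin E)).card ∧
        ∀ x z, Consec E x z → T ≤ ((X ∩ Finset.Ioc p.1 p.2) ∩ Finset.Ioc x z).card := by
      intro p
      by_cases hp : Consec Y p.1 p.2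
      · set A := X ∩ Finset.Ioc p.1 p.2 with hA
        have hfatp : T ^ (i+1) ≤ A.card := hfat p.1 p.2 hp
        have hTpos : 1 ≤ T ^ i := Nat.one_le_pow _ _ (by omega)
        have hTpos1 : 1 ≤ T ^ (i+1) := Nat.one_le_pow _ _ (by omega)
        have hAne : A.Nonempty := Finset.card_pos.1 (by omega)
        have hp2A : p.2 ∈ A := by
          rw [hA]
          exact Finset.mem_inter.2 ⟨hYX hp.2.1, Finset.mem_Ioc.2 ⟨hp.2.2.1, le_refl _⟩⟩
        have hfmaxA : fmax A = p.2 := by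
          have h1 : p.2 ≤ fmax A := le_fmax hp2A
          have h2 : fmax A ∈ X ∩ Finset.Ioc p.1 p.2 := by rw [← hA]; exact fmax_mem hAne
          have h3 := (Finset.mem_Ioc.1 (Finset.mem_inter.1 h2).2).2
          omega
        have hcard' : (T ^ i - 1 + 1) * T ≤ A.card := by
          have : T ^ i - 1 + 1 = T ^ i := by omega
          rw [this, ← pow_succ]
          exact hfatp
        obtain ⟨E, hE1, hE2, hE3, hE4, hE5⟩ := gridLemma hT (T ^ i - 1) A hAne hcard'
        rw [hfmaxA] at hE2
        have hE3' : E.card = T ^ i := by omega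
        exact ⟨E, fun _ => ⟨hE1, hE2, hE3', hE4, hE5⟩⟩
      · exact ⟨∅, fun h => absurd h hp⟩
    choose Esel hEsel using hEex
    set Y' := Y ∪ pairs.biUnion Esel with hY'
    have hEsub : ∀ p ∈ pairs, Esel p ⊆ X ∩ Finset.Ioc p.1 p.2 :=
      fun p hp => (hEsel p ((hmem_pairs p).1 hp)).1
    have hYY' : Y ⊆ Y' := Finset.subset_union_left
    have hY'X : Y' ⊆ X := by
      intro a ha
      rcases Finset.mem_union.1 ha with h | h
      · exact hYX h
      · rw [Finset.mem_biUnion] at h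
        obtain ⟨p, hp, hmem⟩ := h
        exact (Finset.mem_inter.1 (hEsub p hp hmem)).1
    have hEY' : ∀ p ∈ pairs, Esel p ⊆ Y' := by
      intro p hp a ha
      exact Finset.mem_union_right _ (Finset.mem_biUnion.2 ⟨p, hp, ha⟩)
    have hfminY' : fmin Y' = fmin Y := by
      have h1 : fmin Y' ≤ fmin Y := fmin_le (hYY' (fmin_mem hYne))
      have h2 : fmin Y' ∈ Y' := fmin_mem ⟨fmin Y, hYY' (fmin_mem hYne)⟩
      rcases Finset.mem_union.1 h2 with h | h
      · have := fmin_le h; omega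
      · rw [Finset.mem_biUnion] at h
        obtain ⟨p, hp, hmem⟩ := h
        have h3 := (Finset.mem_Ioc.1 (Finset.mem_inter.1 (hEsub p hp hmem)).2).1
        have hpc := (hmem_pairs p).1 hp
        have h4 : fmin Y ≤ p.1 := fmin_le hpc.1
        omega
    -- Persistent i Y'
    have hPers : Persistent d 1 k i Y' := by
      refine ih Y' Y hYY' ?_ hYlarge ?_
      · rw [hfminY']
        have := fmin_subset hYX hYne
        omega
      · intro x z hc
        have hp : (x, z) ∈ pairs := (hmem_pairs (x, z)).2 hc
        have h1 : Esel (x, z) ⊆ Y' ∩ Finset.Ioc x z := by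
          intro a ha
          refine Finset.mem_inter.2 ⟨hEY' _ hp ha, ?_⟩
          exact (Finset.mem_inter.1 (hEsub _ hp ha)).2
        have h2 : (Esel (x,z)).card = T ^ i := (hEsel (x,z) hc).2.2.1
        rw [← h2]
        exact Finset.card_le_card h1
    -- PersClause k X Y'
    have hPC : PersClause k X Y' := by
      refine treeLemma hY'X ⟨fmin Y, hYY' (fmin_mem hYne)⟩ hkT ?_
      intro u v hc
      -- identify the pair p containing v
      have hvY' : v ∈ Y' := hc.2.1
      have huY' : u ∈ Y' := hc.1
      have huv : u < v := hc.2.2.1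
      have hufmin : fmin Y ≤ u := by
        rw [← hfminY']
        exact fmin_le huY'
      obtain ⟨p, hp, hvE⟩ : ∃ p ∈ pairs, v ∈ Esel p := by
        rcases Finset.mem_union.1 hvY' with h | h
        · -- v ∈ Y
          have hvmin : fmin Y < v := by omega
          obtain ⟨x, hx⟩ := consec_pred h hvmin
          have hpx : (x, v) ∈ pairs := (hmem_pairs (x,v)).2 hx
          exact ⟨(x,v), hpx, (hEsel (x,v) hx).2.1⟩
        · rw [Finset.mem_biUnion] at h
          obtain ⟨p, hp, hmem⟩ := h
          exact ⟨p, hp, hmem⟩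
      have hpc : Consec Y p.1 p.2 := (hmem_pairs p).1 hp
      have hvIoc : p.1 < v ∧ v ≤ p.2 :=
        Finset.mem_Ioc.1 (Finset.mem_inter.1 (hEsub p hp hvE)).2
      have hxY' : p.1 ∈ Y' := hYY' hpc.1
      -- u is either p.1 or in Esel p
      have hukey : u = p.1 ∨ u ∈ Esel p := by
        rcases Finset.mem_union.1 huY' with h | h
        · -- u ∈ Y
          rcases hpc.2.2.2 u h with h1 | h1
          · -- u ≤ p.1; then p.1 ≤ u by consecutivity of (u,v) in Y'
            rcases hc.2.2.2 p.1 hxY' with h2 | h2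
            · left; omega
            · omega
          · -- p.2 ≤ u contradicts u < v ≤ p.2
            omega
        · rw [Finset.mem_biUnion] at h
          obtain ⟨q, hq, hmemq⟩ := h
          by_cases hqp : q = p
          · subst hqp; right; exact hmemq
          · -- different pairs
            have hqc : Consec Y q.1 q.2 := (hmem_pairs q).1 hq
            have huIocq : q.1 < u ∧ u ≤ q.2 :=
              Finset.mem_Ioc.1 (Finset.mem_inter.1 (hEsub q hq hmemq)).2
            -- first: q.2 ≠ p.2 (else q.1 = p.1, so q = p)
            have hq2p2 : q.2 ≠ p.2 := by
              intro heq
              apply hqp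
              have h1 : q.1 = p.1 := by
                rcases hpc.2.2.2 q.1 hqc.1 with h2 | h2
                · rcases hqc.2.2.2 p.1 hpc.1 with h3 | h3
                  · omega
                  · have := hqc.2.2.1; have := hpc.2.2.1; omega
                · have := hqc.2.2.1; omega
              exact Prod.ext h1 heq
            -- q.2 ≤ p.1 or p.2 ≤ q.1
            have hdisj : q.2 ≤ p.1 ∨ p.2 ≤ q.1 := by
              rcases hpc.2.2.2 q.2 hqc.2.1 with h2 | h2
              · left; exact h2
              · rcases hqc.2.2.2 p.2 hpc.2.1 with h3 | h3
                · right
                  rcases hqc.2.2.2 p.1 hpc.1 with h4 | h4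
                  · -- p.1 ≤ q.1 and p.2 ≤ q.2... need p.2 ≤ q.1:
                    omega
                  · -- q.2 ≤ p.1: contradiction with h2 : p.2 ≤ q.2 and p.1 < p.2
                    have := hpc.2.2.1; omega
                · omega
            rcases hdisj with h2 | h2
            · -- u ≤ q.2 ≤ p.1 < v, and p.1 ∈ Y': consec forces p.1 ≤ u
              rcases hc.2.2.2 p.1 hxY' with h3 | h3
              · left; omega
              · omega
            · -- p.2 ≤ q.1 < u contradicts u < v ≤ p.2
              omega
      rcases hukey with rfl | huE
      · -- u = p.1 : bottom slack; v = fmin (Esel p)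
        have hvfmin : v = fmin (Esel p) := by
          have h1 : fmin (Esel p) ≤ v := fmin_le hvE
          have h2 : fmin (Esel p) ∈ Esel p := fmin_mem ⟨v, hvE⟩
          have h3 : fmin (Esel p) ∈ Y' := hEY' p hp h2
          rcases hc.2.2.2 _ h3 with h4 | h4
          · -- fmin E ≤ u = p.1, but elements of E are > p.1
            have := (Finset.mem_Ioc.1 (Finset.mem_inter.1 (hEsub p hp h2)).2).1
            omega
          · omega
        have hbot := (hEsel p hpc).2.2.2.1
        have hsub : (X ∩ Finset.Ioc p.1 p.2).filter (fun a => a ≤ fmin (Esel p)) ⊆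
            X ∩ Finset.Ioc p.1 v := by
          intro a ha
          rw [Finset.mem_filter, Finset.mem_inter, Finset.mem_Ioc] at ha
          rw [Finset.mem_inter, Finset.mem_Ioc]
          rw [← hvfmin] at ha
          exact ⟨ha.1.1, ha.1.2.1, ha.2⟩
        exact le_trans hbot (Finset.card_le_card hsub)
      · -- u ∈ Esel p : interior gap
        have hcE : Consec (Esel p) u v := consec_subset (hEY' p hp) hc huE hvE
        have hgap := (hEsel p hpc).2.2.2.2 u v hcE
        have hsub : (X ∩ Finset.Ioc p.1 p.2) ∩ Finset.Ioc u v ⊆ X ∩ Finset.Ioc u v := by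
          intro a ha
          rw [Finset.mem_inter] at ha
          exact Finset.mem_inter.2 ⟨(Finset.mem_inter.1 ha.1).1, ha.2⟩
        exact le_trans hgap (Finset.card_le_card hsub)
    simp only [Persistent]
    exact ⟨Y', hY'X, hPers, hPC⟩


lemma sq_le_two_pow : ∀ m, 4 ≤ m → m * m ≤ 2 ^ m := by
  intro m hm
  induction m with
  | zero => omega
  | succ m ih =>
    rcases Nat.eq_or_lt_of_le hm with h | h
    · rw [← h]; norm_num
    · have hm4 : 4 ≤ m := by omega
      have h1 := ih hm4
      have h2 : 2 ^ (m+1) = 2 ^ m + 2 ^ m := by rw [pow_succ]; ring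
      have h3 : 2*m + 1 ≤ m * m := by nlinarith
      have h4 : (m+1) * (m+1) = m * m + (2*m+1) := by ring
      omega



/-- If `d > 0`, `X` is ω^{2d+1}-large, and `min X > max{k,i,2}`, then `X` is
`(ω^d, k, i)`-persistent. -/
theorem stmt14 (d k i : ℕ) (hd : 0 < d) (X : Finset ℕ)
    (hX : OmegaLarge (2*d + 1) X)
    (hmin : max k (max i 2) < fmin X) :
    Persistent d 1 k i X := by
  set m0 := fmin X with hm0
  have hm3 : 3 ≤ m0 := by
    have := le_max_right i 2
    have := le_max_right k (max i 2)
    omega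
  have hk : k < m0 := lt_of_le_of_lt (le_max_left _ _) hmin
  have hi : i < m0 := lt_of_le_of_lt (le_trans (le_max_left _ _) (le_max_right _ _)) hmin
  set T := max 1 (Nat.clog 2 (k+1)) with hT
  have hT1 : 1 ≤ T := le_max_left _ _
  have hkT : k < 2 ^ T := by
    have h1 : k + 1 ≤ 2 ^ (Nat.clog 2 (k+1)) := Nat.le_pow_clog (by norm_num) _
    have h2 : (2:ℕ) ^ (Nat.clog 2 (k+1)) ≤ 2 ^ T :=
      Nat.pow_le_pow_right (by norm_num) (le_max_right _ _)
    omega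
  have hTlem : T ≤ max 1 (Nat.clog 2 m0) := by
    have : Nat.clog 2 (k+1) ≤ Nat.clog 2 m0 := Nat.clog_mono_right 2 (by omega)
    omega
  have hNle : T ^ i ≤ 2 ^ (2 ^ m0) := by
    rcases Nat.eq_or_lt_of_le hm3 with h3 | h4
    · -- m0 = 3 : k ≤ 2, T ≤ 2, i ≤ 2
      have hk2 : k ≤ 2 := by omega
      have hTle : T ≤ 2 := by
        have hcl : Nat.clog 2 (k+1) ≤ Nat.clog 2 3 := Nat.clog_mono_right 2 (by omega)
        have h4' : Nat.clog 2 3 ≤ Nat.clog 2 4 := Nat.clog_mono_right 2 (by norm_num)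
        have h4 : Nat.clog 2 4 = 2 := by
          rw [show (4:ℕ) = 2^2 by norm_num]
          exact Nat.clog_pow 2 2 (by norm_num)
        omega
      calc T ^ i ≤ 2 ^ i := Nat.pow_le_pow_left hTle i
      _ ≤ 2 ^ (2 ^ m0) := Nat.pow_le_pow_right (by norm_num) (by
          have : i ≤ 2 := by omega
          have h5 : (8:ℕ) ≤ 2 ^ m0 := by
            calc (8:ℕ) = 2^3 := by norm_num
            _ ≤ 2 ^ m0 := Nat.pow_le_pow_right (by norm_num) hm3
          omega)
    · -- m0 ≥ 4
      have hm4 : 4 ≤ m0 := by omega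
      have hTm0 : T ≤ m0 := by
        have h1 : Nat.clog 2 m0 ≤ Nat.clog 2 (2 ^ m0) := by
          refine Nat.clog_mono_right 2 ?_
          exact le_of_lt (Nat.lt_two_pow_self (n := m0))
        have h2 : Nat.clog 2 (2 ^ m0) = m0 := Nat.clog_pow 2 m0 (by norm_num)
        omega
      calc T ^ i ≤ m0 ^ m0 := by
            calc T ^ i ≤ m0 ^ i := Nat.pow_le_pow_left hTm0 i
            _ ≤ m0 ^ m0 := Nat.pow_le_pow_right (by omega) (by omega)
      _ ≤ (2 ^ m0) ^ m0 := Nat.pow_le_pow_left (le_of_lt (Nat.lt_two_pow_self (n := m0))) m0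
      _ = 2 ^ (m0 * m0) := by rw [← pow_mul]
      _ ≤ 2 ^ (2 ^ m0) := Nat.pow_le_pow_right (by norm_num) (sq_le_two_pow m0 hm4)
  obtain ⟨Y, hYX, hYlarge, hYfat⟩ := supplyLemma d X (by rwa [show 2*d+1 = 2*d+1 from rfl]) hm3 (T ^ i) hNle
  exact chainLemma hT1 hkT i X Y hYX (by omega) hYlarge hYfat
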